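/- Let R be a ring, θ an additive invariant on finite-length R-modules, and T a finite-length R-module. Let X' ⊆ T be the submodule with X' in 𝓘_θ and T/X' in 𝓟̄_θ (T_θ^min), and X'' ⊆ T the submodule with X'' in 𝓘̄_θ and T/X'' in 𝓟_θ (T_θ^max). Then θ(X') = θ(X''), and θ(X) ≤ θ(X') for every submodule X ⊆ T; moreover, equality θ(X) = θ(X') holds if and only if X' ⊆ X ⊆ X'' and X/X' is θ-semistable. -/

import Mathlib

universe u

/-- An *additive invariant* on finite-length modules over a ring `R`: an assignment of a real
number to every module (whose value is only constrained on finite-length modules) that is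
invariant under isomorphism and additive in short exact sequences. -/
structure AdditiveInvariant (R : Type u) [Ring R] where
  /-- The value of the invariant on a module. -/
  val : (M : Type u) → [AddCommGroup M] → [Module R M] → ℝ
  /-- Isomorphism invariance on finite-length modules. -/
  iso_inv : ∀ (M N : Type u) [AddCommGroup M] [Module R M] [AddCommGroup N] [Module R N],
    IsFiniteLength R M → (M ≃ₗ[R] N) → val M = val N
  /-- Additivity with respect to submodules and quotients, on finite-length modules. -/
  additive : ∀ (M : Type u) [AddCommGroup M] [Module R M], IsFiniteLength R M →
    ∀ N : Submodule R M, val M = val N + val (M ⧸ N)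

variable {R : Type u} [Ring R]

/-- `M` lies in `𝓘_θ`: every nonzero quotient `Q` of `M` satisfies `θ(Q) > 0`. -/
def MemI (θ : AdditiveInvariant R) (M : Type u) [AddCommGroup M] [Module R M] : Prop :=
  ∀ N : Submodule R M, N ≠ ⊤ → 0 < θ.val (M ⧸ N)

/-- `M` lies in `𝓘̄_θ`: every nonzero quotient `Q` of `M` satisfies `θ(Q) ≥ 0`. -/
def MemIbar (θ : AdditiveInvariant R) (M : Type u) [AddCommGroup M] [Module R M] : Prop :=
  ∀ N : Submodule R M, N ≠ ⊤ → 0 ≤ θ.val (M ⧸ N)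

/-- `M` lies in `𝓟_θ`: every nonzero submodule `X` of `M` satisfies `θ(X) < 0`. -/
def MemP (θ : AdditiveInvariant R) (M : Type u) [AddCommGroup M] [Module R M] : Prop :=
  ∀ X : Submodule R M, X ≠ ⊥ → θ.val X < 0

/-- `M` lies in `𝓟̄_θ`: every nonzero submodule `X` of `M` satisfies `θ(X) ≤ 0`. -/
def MemPbar (θ : AdditiveInvariant R) (M : Type u) [AddCommGroup M] [Module R M] : Prop :=
  ∀ X : Submodule R M, X ≠ ⊥ → θ.val X ≤ 0

/-- `M` is `θ`-semistable: `θ(M) = 0` and every submodule `X` of `M` satisfies `θ(X) ≤ 0`. -/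
def Semistable (θ : AdditiveInvariant R) (M : Type u) [AddCommGroup M] [Module R M] : Prop :=
  θ.val M = 0 ∧ ∀ X : Submodule R M, θ.val X ≤ 0


section ThetaHelpers

variable (θ : AdditiveInvariant R)

lemma fl_sub {M : Type u} [AddCommGroup M] [Module R M] (h : IsFiniteLength R M)
    (p : Submodule R M) : IsFiniteLength R p := by
  obtain ⟨h1, h2⟩ := isFiniteLength_iff_isNoetherian_isArtinian.mp h
  exact isFiniteLength_iff_isNoetherian_isArtinian.mpr ⟨inferInstance, inferInstance⟩

lemma fl_quot {M : Type u} [AddCommGroup M] [Module R M] (h : IsFiniteLength R M)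
    (p : Submodule R M) : IsFiniteLength R (M ⧸ p) := by
  obtain ⟨h1, h2⟩ := isFiniteLength_iff_isNoetherian_isArtinian.mp h
  exact isFiniteLength_iff_isNoetherian_isArtinian.mpr ⟨inferInstance, inferInstance⟩

/-- A linear equivalence between two subsingleton modules. -/
def zeroEquiv (A B : Type u) [AddCommGroup A] [Module R A] [AddCommGroup B] [Module R B]
    [Subsingleton A] [Subsingleton B] : A ≃ₗ[R] B where
  toFun _ := 0
  invFun _ := 0
  map_add' _ _ := Subsingleton.elim _ _
  map_smul' _ _ := Subsingleton.elim _ _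
  left_inv _ := Subsingleton.elim _ _
  right_inv _ := Subsingleton.elim _ _

lemma theta_subsingleton {M : Type u} [AddCommGroup M] [Module R M] [Subsingleton M] :
    θ.val M = 0 := by
  have hfl : IsFiniteLength R M := .of_subsingleton
  haveI : Subsingleton (M ⧸ (⊥ : Submodule R M)) :=
    (Submodule.quotEquivOfEqBot ⊥ rfl).toEquiv.subsingleton
  have h := θ.additive M hfl ⊥
  have h2 : θ.val ↥(⊥ : Submodule R M) = θ.val M :=
    θ.iso_inv _ _ (fl_sub hfl ⊥) (zeroEquiv _ _)
  have h3 : θ.val (M ⧸ (⊥ : Submodule R M)) = θ.val M :=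
    θ.iso_inv _ _ (fl_quot hfl ⊥) (zeroEquiv _ _)
  rw [h2, h3] at h
  linarith

lemma theta_nested {M : Type u} [AddCommGroup M] [Module R M] (hM : IsFiniteLength R M)
    {p q : Submodule R M} (h : p ≤ q) :
    θ.val q = θ.val p + θ.val (↥q ⧸ Submodule.comap q.subtype p) := by
  have hq := θ.additive q (fl_sub hM q) (Submodule.comap q.subtype p)
  rwa [θ.iso_inv _ _ (fl_sub (fl_sub hM q) _) (Submodule.comapSubtypeEquivOfLe h)] at hq

lemma theta_key {M : Type u} [AddCommGroup M] [Module R M] (hM : IsFiniteLength R M)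
    (p q : Submodule R M) :
    θ.val p = θ.val ↥(p ⊓ q) + θ.val ↥(Submodule.map q.mkQ p) := by
  have h := theta_nested θ hM (inf_le_left : p ⊓ q ≤ p)
  have e : (↥p ⧸ Submodule.comap p.subtype (p ⊓ q)) ≃ₗ[R] ↥(Submodule.map q.mkQ p) := by
    refine (Submodule.quotEquivOfEq _ _ ?_).trans
      ((q.mkQ.comp p.subtype).quotKerEquivRange.trans (LinearEquiv.ofEq _ _ ?_))
    · rw [LinearMap.ker_comp, Submodule.ker_mkQ, Submodule.comap_inf,
        Submodule.comap_subtype_self, top_inf_eq]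
    · rw [LinearMap.range_comp, Submodule.range_subtype]
  rwa [θ.iso_inv _ _ (fl_quot (fl_sub hM p) _) e] at h

lemma theta_quot_nonneg {M : Type u} [AddCommGroup M] [Module R M]
    (hI : MemIbar θ M) (N : Submodule R M) : 0 ≤ θ.val (M ⧸ N) := by
  by_cases hN : N = ⊤
  · subst hN
    have : Subsingleton (M ⧸ (⊤ : Submodule R M)) :=
      Submodule.Quotient.subsingleton_iff.mpr rfl
    exact le_of_eq (theta_subsingleton θ).symm
  · exact hI N hN

lemma theta_sub_nonpos {M : Type u} [AddCommGroup M] [Module R M]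
    (hP : MemPbar θ M) (X : Submodule R M) : θ.val X ≤ 0 := by
  by_cases hX : X = ⊥
  · subst hX
    exact le_of_eq (theta_subsingleton θ)
  · exact hP X hX

lemma memIbar_of_memI {M : Type u} [AddCommGroup M] [Module R M]
    (h : MemI θ M) : MemIbar θ M := fun N hN => le_of_lt (h N hN)

lemma memPbar_of_memP {M : Type u} [AddCommGroup M] [Module R M]
    (h : MemP θ M) : MemPbar θ M := fun X hX => le_of_lt (h X hX)

lemma theta_le_min {T : Type u} [AddCommGroup T] [Module R T] (hT : IsFiniteLength R T)
    {X' : Submodule R T} (hX'I : MemI θ X') (hX'P : MemPbar θ (T ⧸ X'))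
    (X : Submodule R T) :
    θ.val X ≤ θ.val X' ∧ (¬ X' ≤ X → θ.val X < θ.val X') := by
  have h1 := theta_key θ hT X X'
  have h2 : θ.val ↥(Submodule.map X'.mkQ X) ≤ 0 := theta_sub_nonpos θ hX'P _
  have h3 := theta_nested θ hT (inf_le_left : X' ⊓ X ≤ X')
  rw [inf_comm X X'] at h1
  have h4 : 0 ≤ θ.val (↥X' ⧸ Submodule.comap X'.subtype (X' ⊓ X)) :=
    theta_quot_nonneg θ (memIbar_of_memI θ hX'I) _
  constructor
  · linarith
  · intro hne
    have hne' : Submodule.comap X'.subtype (X' ⊓ X) ≠ ⊤ := by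
      rw [Ne, Submodule.comap_subtype_eq_top]
      intro hle
      exact hne (le_trans hle inf_le_right)
    have h5 := hX'I _ hne'
    clear hne
    linarith

end ThetaHelpers

/-- **Proposition (Proposition `pr:TminTmax`).** Let `X' = T_θ^min` (i.e. `X' ∈ 𝓘_θ` and
`T/X' ∈ 𝓟̄_θ`) and `X'' = T_θ^max` (i.e. `X'' ∈ 𝓘̄_θ` and `T/X'' ∈ 𝓟_θ`). Then
`θ(X') = θ(X'')`, every submodule `X ⊆ T` satisfies `θ(X) ≤ θ(X')`, and equality holds
if and only if `X' ⊆ X ⊆ X''` and `X/X'` is `θ`-semistable. -/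
theorem theta_min_max (R : Type u) [Ring R] (θ : AdditiveInvariant R)
    (T : Type u) [AddCommGroup T] [Module R T] (hT : IsFiniteLength R T)
    (X' X'' : Submodule R T)
    (hX'I : MemI θ X') (hX'P : MemPbar θ (T ⧸ X'))
    (hX''I : MemIbar θ X'') (hX''P : MemP θ (T ⧸ X'')) :
    θ.val X' = θ.val X'' ∧
    ∀ X : Submodule R T,
      θ.val X ≤ θ.val X' ∧
      (θ.val X = θ.val X' ↔
        X' ≤ X ∧ X ≤ X'' ∧ Semistable θ (X ⧸ Submodule.comap X.subtype X')) := by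
  have main := fun X => theta_le_min θ hT hX'I hX'P X
  have e1 : θ.val X'' ≤ θ.val X' := (main X'').1
  have e2 : θ.val X' ≤ θ.val X'' := by
    have h1 := theta_key θ hT X' X''
    have h2 : θ.val ↥(Submodule.map X''.mkQ X') ≤ 0 :=
      theta_sub_nonpos θ (memPbar_of_memP θ hX''P) _
    have h3 := theta_nested θ hT (inf_le_right : X' ⊓ X'' ≤ X'')
    have h4 : 0 ≤ θ.val (↥X'' ⧸ Submodule.comap X''.subtype (X' ⊓ X'')) :=
      theta_quot_nonneg θ hX''I _
    linarith
  refine ⟨le_antisymm e2 e1, fun X => ⟨(main X).1, ?_, ?_⟩⟩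
  · -- forward direction
    intro heq
    have hX'le : X' ≤ X := by
      by_contra hn
      exact absurd heq (ne_of_lt ((main X).2 hn))
    have hXle : X ≤ X'' := by
      by_contra hn
      have hmapne : Submodule.map X''.mkQ X ≠ ⊥ := by
        intro hb
        apply hn
        have := hb.le
        rw [Submodule.map_le_iff_le_comap, Submodule.comap_bot, Submodule.ker_mkQ] at this
        exact this
      have h2 : θ.val ↥(Submodule.map X''.mkQ X) < 0 := hX''P _ hmapne
      have h1 := theta_key θ hT X X''
      have h3 : θ.val ↥(X ⊓ X'') ≤ θ.val X' := (main (X ⊓ X'')).1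
      clear hn
      linarith
    have h0 : θ.val (↥X ⧸ Submodule.comap X.subtype X') = 0 := by
      have := theta_nested θ hT hX'le
      linarith
    refine ⟨hX'le, hXle, h0, ?_⟩
    intro S
    have hq : Submodule.comap X.subtype X'
        ≤ Submodule.comap (Submodule.comap X.subtype X').mkQ S := by
      conv_lhs => rw [← Submodule.ker_mkQ (Submodule.comap X.subtype X')]
      exact Submodule.comap_mono (bot_le : (⊥ : Submodule R _) ≤ S)
    have hk := theta_key θ (fl_sub hT X)
      (Submodule.comap (Submodule.comap X.subtype X').mkQ S) (Submodule.comap X.subtype X')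
    have hinf : Submodule.comap (Submodule.comap X.subtype X').mkQ S
        ⊓ Submodule.comap X.subtype X' = Submodule.comap X.subtype X' := inf_eq_right.mpr hq
    have hmap : Submodule.map (Submodule.comap X.subtype X').mkQ
        (Submodule.comap (Submodule.comap X.subtype X').mkQ S) = S := by
      rw [Submodule.map_comap_eq, Submodule.range_mkQ, top_inf_eq]
    rw [hinf, hmap] at hk
    have hqX' : θ.val ↥(Submodule.comap X.subtype X') = θ.val X' :=
      θ.iso_inv _ _ (fl_sub (fl_sub hT X) _) (Submodule.comapSubtypeEquivOfLe hX'le)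
    have hY : θ.val ↥(Submodule.comap (Submodule.comap X.subtype X').mkQ S)
        = θ.val ↥(Submodule.map X.subtype (Submodule.comap (Submodule.comap X.subtype X').mkQ S)) :=
      θ.iso_inv _ _ (fl_sub (fl_sub hT X) _)
        (Submodule.equivMapOfInjective X.subtype (Submodule.injective_subtype X) _)
    have hle := (main (Submodule.map X.subtype
      (Submodule.comap (Submodule.comap X.subtype X').mkQ S))).1
    linarith
  · rintro ⟨h1, _h2, hss⟩
    have := theta_nested θ hT h1
    rw [hss.1] at this
    linarith
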